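/- If u, u' are two strictly monotonic utility functions on ℝ₊² satisfying the single-crossing property, then for any bundles x, r: u(x) = u(r) and u'(x) = u'(r) together imply x = r. -/
import Mathlib


/-- If two strictly monotonic utilities on the nonnegative quadrant satisfy the
single-crossing property, then a common indifference `u x = u r`, `v x = v r`
forces `x = r`. -/
theorem stmt_16 (u v : ℝ × ℝ → ℝ)
    (humono : ∀ a b : ℝ × ℝ, 0 ≤ a.1 → 0 ≤ a.2 →
      a.1 ≤ b.1 → a.2 ≤ b.2 → a ≠ b → u a < u b)
    (hvmono : ∀ a b : ℝ × ℝ, 0 ≤ a.1 → 0 ≤ a.2 →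
      a.1 ≤ b.1 → a.2 ≤ b.2 → a ≠ b → v a < v b)
    (hsc1 : ∀ a b : ℝ × ℝ, 0 ≤ a.1 → 0 ≤ a.2 → 0 ≤ b.1 → 0 ≤ b.2 →
      a.1 < b.1 → b.2 < a.2 → u b ≥ u a → v b > v a)
    (hsc2 : ∀ a b : ℝ × ℝ, 0 ≤ a.1 → 0 ≤ a.2 → 0 ≤ b.1 → 0 ≤ b.2 →
      b.1 < a.1 → a.2 < b.2 → v b ≥ v a → u b > u a)
    (x r : ℝ × ℝ) (hx1 : 0 ≤ x.1) (hx2 : 0 ≤ x.2) (hr1 : 0 ≤ r.1) (hr2 : 0 ≤ r.2)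
    (h1 : u x = u r) (h2 : v x = v r) : x = r := by
  rcases lt_trichotomy x.1 r.1 with h | h | h
  · rcases le_or_gt x.2 r.2 with h' | h'
    · exact absurd (humono x r hx1 hx2 h.le h' (fun e => absurd (congrArg Prod.fst e) h.ne)) (by rw [h1]; exact lt_irrefl _)
    · exact absurd (hsc1 x r hx1 hx2 hr1 hr2 h h' h1.le) (by rw [h2]; exact lt_irrefl _)
  · rcases lt_trichotomy x.2 r.2 with h' | h' | h'
    · exact absurd (humono x r hx1 hx2 h.le h'.le (fun e => absurd (congrArg Prod.snd e) h'.ne)) (by rw [h1]; exact lt_irrefl _)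
    · exact Prod.ext h h'
    · exact absurd (humono r x hr1 hr2 h.ge h'.le (fun e => absurd (congrArg Prod.snd e) h'.ne)) (by rw [h1]; exact lt_irrefl _)
  · rcases le_or_gt r.2 x.2 with h' | h'
    · exact absurd (humono r x hr1 hr2 h.le h' (fun e => absurd (congrArg Prod.fst e) h.ne)) (by rw [h1]; exact lt_irrefl _)
    · exact absurd (hsc1 r x hr1 hr2 hx1 hx2 h h' h1.ge) (by rw [h2]; exact lt_irrefl _)
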